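/- The numerical range W(A) = {x*Ax : x ∈ ℂⁿ, ‖x‖ = 1} of a complex n×n matrix A is a convex subset of ℂ. -/

import Mathlib

open Matrix

namespace ToeplitzHausdorff

variable {n : ℕ}

/-- Numerical form `xᴴ B x`. -/
noncomputable def q (B : Matrix (Fin n) (Fin n) ℂ) (x : Fin n → ℂ) : ℂ :=
  star x ⬝ᵥ B.mulVec x

/-- Sesquilinear form `uᴴ B v`. -/
noncomputable def sq (B : Matrix (Fin n) (Fin n) ℂ) (u v : Fin n → ℂ) : ℂ :=
  star u ⬝ᵥ B.mulVec v

lemma q_smul (B : Matrix (Fin n) (Fin n) ℂ) (c : ℂ) (x : Fin n → ℂ) :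
    q B (c • x) = (starRingEnd ℂ) c * c * q B x := by
  simp [q, Matrix.mulVec_smul, star_smul, smul_dotProduct, dotProduct_smul,
    smul_smul]
  ring

lemma dot_star_self_smul (c : ℂ) (x : Fin n → ℂ) :
    star (c • x) ⬝ᵥ (c • x) = (starRingEnd ℂ) c * c * (star x ⬝ᵥ x) := by
  simp [star_smul, smul_dotProduct, dotProduct_smul, smul_smul]
  ring

lemma q_expand (B : Matrix (Fin n) (Fin n) ℂ) (x y : Fin n → ℂ) (t : ℝ) :
    q B (((1 - t : ℝ) : ℂ) • x + ((t : ℝ) : ℂ) • y) =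
      ((1 - t : ℝ) : ℂ)^2 * q B x + ((1 - t : ℝ) : ℂ) * ((t : ℝ) : ℂ) * (sq B x y + sq B y x)
        + ((t : ℝ) : ℂ)^2 * q B y := by
  simp [q, sq, Matrix.mulVec_add, Matrix.mulVec_smul, star_add, star_smul,
    add_dotProduct, smul_dotProduct, dotProduct_add,
    dotProduct_smul, smul_smul, Complex.conj_ofReal]
  ring

lemma dot_expand (x y : Fin n → ℂ) (t : ℝ) :
    star (((1 - t : ℝ) : ℂ) • x + ((t : ℝ) : ℂ) • y) ⬝ᵥ
        (((1 - t : ℝ) : ℂ) • x + ((t : ℝ) : ℂ) • y) =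
      ((1 - t : ℝ) : ℂ)^2 * (star x ⬝ᵥ x)
        + ((1 - t : ℝ) : ℂ) * ((t : ℝ) : ℂ) * (star x ⬝ᵥ y + star y ⬝ᵥ x)
        + ((t : ℝ) : ℂ)^2 * (star y ⬝ᵥ y) := by
  simp [add_dotProduct, smul_dotProduct, dotProduct_add,
    dotProduct_smul, star_add, star_smul, smul_smul, Complex.conj_ofReal]
  ring

lemma dot_star_self_re (v : Fin n → ℂ) :
    star v ⬝ᵥ v = ((∑ i, Complex.normSq (v i) : ℝ) : ℂ) := by
  simp [dotProduct, Complex.star_def, Complex.normSq_eq_conj_mul_self]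

lemma dot_star_self_eq_zero {v : Fin n → ℂ} (h : star v ⬝ᵥ v = 0) : v = 0 := by
  rw [dot_star_self_re] at h
  have h' : (∑ i, Complex.normSq (v i) : ℝ) = 0 := by exact_mod_cast h
  funext i
  have hnonneg : ∀ i ∈ Finset.univ, (0:ℝ) ≤ Complex.normSq (v i) :=
    fun i _ => Complex.normSq_nonneg _
  have := (Finset.sum_eq_zero_iff_of_nonneg hnonneg).mp h' i (Finset.mem_univ i)
  simpa [Complex.normSq_eq_zero] using this

lemma star_dot_symm (x y : Fin n → ℂ) :
    star y ⬝ᵥ x = (starRingEnd ℂ) (star x ⬝ᵥ y) := by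
  simp [dotProduct, map_sum, mul_comm]

/-- Phase adjustment: there is a unimodular `μ` making `Im (μ d + conj μ * e) = 0`. -/
lemma phase_exists (d e : ℂ) :
    ∃ μ : ℂ, Complex.normSq μ = 1 ∧ (μ * d + (starRingEnd ℂ) μ * e).im = 0 := by
  by_cases h : d.im + e.im = 0 ∧ d.re - e.re = 0
  · exact ⟨1, by simp, by simp [Complex.add_im, h.1]⟩
  · set r : ℝ := Real.sqrt ((d.re - e.re)^2 + (d.im + e.im)^2) with hrdef
    have hrpos : 0 < r := by
      rw [hrdef]
      apply Real.sqrt_pos.mpr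
      rcases not_and_or.mp h with h1 | h1 <;>
        · have : (d.re - e.re) ≠ 0 ∨ (d.im + e.im) ≠ 0 := by tauto
          rcases this with h2 | h2 <;> positivity
    have hr2 : r^2 = (d.re - e.re)^2 + (d.im + e.im)^2 := Real.sq_sqrt (by positivity)
    refine ⟨(((d.re - e.re)/r : ℝ) : ℂ) + (((-(d.im + e.im))/r : ℝ) : ℂ) * Complex.I, ?_, ?_⟩
    · rw [Complex.normSq_add_mul_I]
      field_simp
      linarith [hr2]
    · simp only [map_add, _root_.map_mul, Complex.conj_ofReal, Complex.conj_I, Complex.add_im,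
        Complex.mul_im, Complex.ofReal_re, Complex.ofReal_im, Complex.I_re, Complex.I_im,
        Complex.neg_im, Complex.neg_re, mul_neg, neg_mul, Complex.add_re, Complex.sub_re,
        Complex.mul_re, Complex.sub_im]
      field_simp
      ring

/-- Core lemma: if `1` and `0` are numerical values of `B`, so is every `s ∈ [0,1]`. -/
lemma core (B : Matrix (Fin n) (Fin n) ℂ) (x y : Fin n → ℂ)
    (hx : star x ⬝ᵥ x = 1) (hy : star y ⬝ᵥ y = 1)
    (hqx : q B x = 1) (hqy : q B y = 0) {s : ℝ} (hs0 : 0 ≤ s) (hs1 : s ≤ 1) :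
    ∃ w : Fin n → ℂ, star w ⬝ᵥ w = 1 ∧ q B w = (s : ℂ) := by
  -- adjust the phase of `y`
  obtain ⟨μ, hμ1, hμ2⟩ := phase_exists (sq B x y) (sq B y x)
  have hμc : (starRingEnd ℂ) μ * μ = 1 := by
    rw [← Complex.normSq_eq_conj_mul_self, hμ1]; norm_num
  set y' : Fin n → ℂ := μ • y with hy'def
  have hy' : star y' ⬝ᵥ y' = 1 := by
    rw [hy'def, dot_star_self_smul, hy, hμc]; ring
  have hqy' : q B y' = 0 := by
    rw [hy'def, q_smul, hμc, hqy]; ring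
  have hsxy' : sq B x y' = μ * sq B x y := by
    simp [sq, hy'def, Matrix.mulVec_smul, dotProduct_smul, smul_eq_mul]
  have hsy'x : sq B y' x = (starRingEnd ℂ) μ * sq B y x := by
    simp [sq, hy'def, star_smul, smul_dotProduct, smul_eq_mul]
  have hIm : (sq B x y' + sq B y' x).im = 0 := by
    rw [hsxy', hsy'x]; exact hμ2
  -- the path
  set c : ℝ → (Fin n → ℂ) := fun t => ((1 - t : ℝ) : ℂ) • x + ((t : ℝ) : ℂ) • y' with hcdef
  set R : ℝ := (sq B x y' + sq B y' x).re with hRdef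
  set S : ℝ := 2 * (star x ⬝ᵥ y').re with hSdef
  -- numerical value along the path is real
  have hqc : ∀ t : ℝ, q B (c t) = (((1-t)^2 + (1-t)*t*R : ℝ) : ℂ) := by
    intro t
    simp only [hcdef]
    rw [q_expand B x y' t, hqx, hqy']
    have hre : sq B x y' + sq B y' x = ((R : ℝ) : ℂ) := by
      apply Complex.ext
      · simp [hRdef]
      · simp [hIm]
    rw [hre]
    push_cast
    ring
  -- squared norm along the path
  have hdotc : ∀ t : ℝ, star (c t) ⬝ᵥ (c t) = (((1-t)^2 + (1-t)*t*S + t^2 : ℝ) : ℂ) := by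
    intro t
    simp only [hcdef]
    rw [dot_expand x y' t, hx, hy']
    have hsym : star y' ⬝ᵥ x = (starRingEnd ℂ) (star x ⬝ᵥ y') := star_dot_symm x y'
    have hre : star x ⬝ᵥ y' + star y' ⬝ᵥ x = ((S : ℝ) : ℂ) := by
      rw [hsym]
      apply Complex.ext
      · simp [hSdef]; ring
      · simp
    rw [hre]
    push_cast
    ring
  set N : ℝ → ℝ := fun t => (1-t)^2 + (1-t)*t*S + t^2 with hNdef
  set M : ℝ → ℝ := fun t => (1-t)^2 + (1-t)*t*R with hMdef
  -- nonvanishing of the path on [0,1]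
  have hcne : ∀ t : ℝ, t ∈ Set.Icc (0:ℝ) 1 → c t ≠ 0 := by
    intro t ht hc0
    have heq : ((t : ℝ) : ℂ) • y' = (((t - 1 : ℝ)) : ℂ) • x := by
      have h2 : ((1 - t : ℝ) : ℂ) • x + ((t : ℝ) : ℂ) • y' = 0 := by
        have := hc0; simp only [hcdef] at this; exact this
      have h3 : ((t : ℝ) : ℂ) • y' = -(((1 - t : ℝ) : ℂ) • x) :=
        eq_neg_of_add_eq_zero_right h2
      rw [h3, ← neg_smul]
      congr 1
      push_cast
      ring
    have hqeq : q B (((t : ℝ) : ℂ) • y') = q B ((((t - 1 : ℝ)) : ℂ) • x) := by rw [heq]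
    rw [q_smul B (((t : ℝ)) : ℂ) y', q_smul B (((t - 1 : ℝ)) : ℂ) x, hqx, hqy'] at hqeq
    simp only [Complex.conj_ofReal, mul_one, mul_zero] at hqeq
    have ht1 : ((t - 1 : ℝ) : ℂ) * ((t - 1 : ℝ) : ℂ) = 0 := hqeq.symm
    have ht1' : (t - 1 : ℝ) = 0 := by exact_mod_cast mul_self_eq_zero.mp ht1
    have ht1'' : t = 1 := by linarith
    subst ht1''
    have hy0 : y' = 0 := by simpa using heq
    rw [hy0] at hy'
    simp [dotProduct] at hy'
  -- `N` is positive on `[0,1]`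
  have hNpos : ∀ t : ℝ, t ∈ Set.Icc (0:ℝ) 1 → 0 < N t := by
    intro t ht
    have h1 : star (c t) ⬝ᵥ (c t) = ((N t : ℝ) : ℂ) := hdotc t
    have h2 : (0:ℝ) ≤ N t := by
      have h3 := dot_star_self_re (c t)
      rw [h1] at h3
      have h4 : (N t : ℝ) = ∑ i, Complex.normSq (c t i) := by exact_mod_cast h3
      rw [h4]
      exact Finset.sum_nonneg fun i _ => Complex.normSq_nonneg _
    rcases lt_or_eq_of_le h2 with h | h
    · exact h
    · exact absurd (dot_star_self_eq_zero (by rw [h1, ← h]; norm_num)) (hcne t ht)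
  -- the real-valued quotient function
  set g : ℝ → ℝ := fun t => M t / N t with hgdef
  have hg0 : g 0 = 1 := by simp [hgdef, hMdef, hNdef]
  have hg1 : g 1 = 0 := by simp [hgdef, hMdef, hNdef]
  have hgcont : ContinuousOn g (Set.Icc 0 1) := by
    rw [hgdef]
    apply ContinuousOn.div
    · rw [hMdef]; fun_prop
    · rw [hNdef]; fun_prop
    · intro t ht; exact ne_of_gt (hNpos t ht)
  have hmem : s ∈ Set.Icc (g 1) (g 0) := by rw [hg0, hg1]; exact ⟨hs0, hs1⟩
  obtain ⟨t, ht, hgt⟩ := intermediate_value_Icc' (by norm_num : (0:ℝ) ≤ 1) hgcont hmem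
  have hNt : 0 < N t := hNpos t ht
  set r : ℝ := (Real.sqrt (N t))⁻¹ with hrdef
  have hsq : Real.sqrt (N t) * Real.sqrt (N t) = N t := Real.mul_self_sqrt hNt.le
  have hsqpos : 0 < Real.sqrt (N t) := Real.sqrt_pos.mpr hNt
  have hrr : r * r * N t = 1 := by
    rw [hrdef]
    field_simp
    exact (Real.sq_sqrt hNt.le).symm
  have hMt : M t = s * N t := by
    have h5 := hgt
    rw [hgdef] at h5
    field_simp [ne_of_gt hNt] at h5
    linarith [h5]
  refine ⟨((r : ℝ) : ℂ) • c t, ?_, ?_⟩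
  · rw [dot_star_self_smul, hdotc t]
    simp only [Complex.conj_ofReal]
    have hcast : ((r : ℝ) : ℂ) * ((r : ℝ) : ℂ) * (((1-t)^2 + (1-t)*t*S + t^2 : ℝ) : ℂ)
        = ((r * r * N t : ℝ) : ℂ) := by
      rw [hNdef]; push_cast; ring
    rw [hcast, hrr]
    norm_num
  · rw [q_smul, hqc t]
    simp only [Complex.conj_ofReal]
    have hcast : ((r : ℝ) : ℂ) * ((r : ℝ) : ℂ) * (((1-t)^2 + (1-t)*t*R : ℝ) : ℂ)
        = ((r * r * M t : ℝ) : ℂ) := by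
      rw [hMdef]; push_cast; ring
    rw [hcast, hMt]
    have h6 : r * r * (s * N t) = s := by nlinarith [hrr]
    rw [h6]

lemma euclid_dot (v : EuclideanSpace ℂ (Fin n)) :
    star (v : Fin n → ℂ) ⬝ᵥ (v : Fin n → ℂ) = ((‖v‖^2 : ℝ) : ℂ) := by
  rw [dot_star_self_re]
  norm_cast
  have h1 : ‖v‖^2 = ∑ i, ‖(v : Fin n → ℂ) i‖^2 := by
    rw [EuclideanSpace.norm_eq]
    rw [Real.sq_sqrt (Finset.sum_nonneg fun i _ => sq_nonneg _)]
  rw [h1]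
  refine Finset.sum_congr rfl fun i _ => ?_
  rw [Complex.normSq_eq_norm_sq]

lemma q_affine (A : Matrix (Fin n) (Fin n) ℂ) (α β : ℂ) (u : Fin n → ℂ) :
    q (α • (A - β • (1 : Matrix (Fin n) (Fin n) ℂ))) u
      = α * (q A u - β * (star u ⬝ᵥ u)) := by
  simp [q, Matrix.sub_mulVec, Matrix.smul_mulVec, Matrix.one_mulVec,
    dotProduct_sub, dotProduct_smul, smul_eq_mul]

end ToeplitzHausdorff

/-- **Toeplitz–Hausdorff theorem**: the numerical range
`W(A) = { xᴴ A x : x ∈ ℂⁿ, ‖x‖ = 1 }` of a complex `n × n` matrix `A`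
is a convex subset of `ℂ`. -/
theorem numericalRange_convex (n : ℕ) (A : Matrix (Fin n) (Fin n) ℂ) :
    Convex ℝ {z : ℂ | ∃ x : EuclideanSpace ℂ (Fin n), ‖x‖ = 1 ∧
      star (x : Fin n → ℂ) ⬝ᵥ A.mulVec (x : Fin n → ℂ) = z} := by
  intro z1 hz1 z2 hz2 a b ha hb hab
  obtain ⟨x, hx, hxz⟩ := hz1
  obtain ⟨y, hy, hyz⟩ := hz2
  have hdx : star (x : Fin n → ℂ) ⬝ᵥ (x : Fin n → ℂ) = 1 := by
    rw [ToeplitzHausdorff.euclid_dot, hx]; norm_num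
  have hdy : star (y : Fin n → ℂ) ⬝ᵥ (y : Fin n → ℂ) = 1 := by
    rw [ToeplitzHausdorff.euclid_dot, hy]; norm_num
  by_cases hz : z1 = z2
  · refine ⟨x, hx, ?_⟩
    rw [hxz, hz, ← add_smul, hab, one_smul]
  · have hzz : z1 - z2 ≠ 0 := sub_ne_zero.mpr hz
    set B : Matrix (Fin n) (Fin n) ℂ :=
      (z1 - z2)⁻¹ • (A - z2 • (1 : Matrix (Fin n) (Fin n) ℂ)) with hB
    have hqB : ∀ u : Fin n → ℂ, ToeplitzHausdorff.q B u
        = (z1 - z2)⁻¹ * (ToeplitzHausdorff.q A u - z2 * (star u ⬝ᵥ u)) := by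
      intro u
      rw [hB, ToeplitzHausdorff.q_affine]
    have hqAx : ToeplitzHausdorff.q A (x : Fin n → ℂ) = z1 := hxz
    have hqAy : ToeplitzHausdorff.q A (y : Fin n → ℂ) = z2 := hyz
    have hqBx : ToeplitzHausdorff.q B (x : Fin n → ℂ) = 1 := by
      rw [hqB, hqAx, hdx, mul_one]
      field_simp
    have hqBy : ToeplitzHausdorff.q B (y : Fin n → ℂ) = 0 := by
      rw [hqB, hqAy, hdy, mul_one]
      simp
    obtain ⟨w, hw1, hw2⟩ := ToeplitzHausdorff.core B (x : Fin n → ℂ) (y : Fin n → ℂ)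
      hdx hdy hqBx hqBy (s := a) ha (by linarith)
    refine ⟨(WithLp.equiv 2 (Fin n → ℂ)).symm w, ?_, ?_⟩
    · set W : EuclideanSpace ℂ (Fin n) := (WithLp.equiv 2 (Fin n → ℂ)).symm w with hW
      have hcoe : (W : Fin n → ℂ) = w := rfl
      have h1 : ((‖W‖^2 : ℝ) : ℂ) = 1 := by
        rw [← ToeplitzHausdorff.euclid_dot, hcoe, hw1]
      have h2 : ‖W‖^2 = 1 := by exact_mod_cast h1
      have h3 : (0:ℝ) ≤ ‖W‖ := norm_nonneg _
      nlinarith [h2, h3]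
    · have hcoe : (((WithLp.equiv 2 (Fin n → ℂ)).symm w : EuclideanSpace ℂ (Fin n)) :
          Fin n → ℂ) = w := rfl
      rw [hcoe]
      have h7 := hw2
      rw [hqB w, hw1, mul_one] at h7
      have h8 : ToeplitzHausdorff.q A w - z2 = (a : ℂ) * (z1 - z2) := by
        field_simp at h7
        linear_combination h7
      have h9 : star w ⬝ᵥ A.mulVec w = ToeplitzHausdorff.q A w := rfl
      have hb' : (b : ℂ) = 1 - (a : ℂ) := by
        have : b = 1 - a := by linarith
        exact_mod_cast this
      rw [Complex.real_smul, Complex.real_smul, hb', h9]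
      linear_combination h8
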